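/- Let S be the set of T-even matrix polynomials in P_m(ℂ^{n×n}) and let P ∈ S be regular. Let λ ∈ ℂ and x ∈ ℂⁿ with x^H x = 1, and set r := −P(λ)x, Λ_m := (1, λ, …, λ^m)ᵀ, and P_x := I − x x^H. Then η_F^S(λ, x, P) = sqrt( |xᵀr|²/‖Π_e(Λ_m)‖₂² + 2(‖r‖₂² − |xᵀr|²)/‖Λ_m‖₂² ). In particular, if m is odd and |λ| = 1, then η_F^S(λ, x, P) = √2 · η(λ, x, P). Moreover, defining E_j := (conj(λ^j)/‖Π_e(Λ_m)‖₂²)·(xᵀr)·x̄ x^H + (conj(λ^j)/‖Λ_m‖₂²)·(x̄ rᵀ P_x + P_xᵀ r x^H) for even j, and E_j := (conj(λ^j)/‖Λ_m‖₂²)·(P_xᵀ r x^H − x̄ rᵀ P_x) for odd j, the polynomial ΔP(z) := Σ_{j=0}^m z^j E_j is the unique T-even polynomial in P_m(ℂ^{n×n}) satisfying P(λ)x + ΔP(λ)x = 0 and |||ΔP|||_F = η_F^S(λ, x, P). -/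

import Mathlib

open scoped ComplexConjugate
open Matrix

noncomputable section

variable {ι : Type*} [Fintype ι] [DecidableEq ι]

/-- Evaluation of the matrix polynomial with coefficient list `A` at the point `z`. -/
def polyEval {m : ℕ} (A : Fin (m+1) → Matrix ι ι ℂ) (z : ℂ) : Matrix ι ι ℂ :=
  ∑ j : Fin (m+1), z ^ (j : ℕ) • A j

/-- Squared Euclidean norm of a complex vector. -/
def vecNormSq (x : ι → ℂ) : ℝ := ∑ i, ‖x i‖ ^ 2

/-- Euclidean norm of a complex vector. -/
def vecNorm (x : ι → ℂ) : ℝ := Real.sqrt (vecNormSq x)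

/-- `‖(1, z, …, z^m)‖₂²`. -/
def lamNormSq (m : ℕ) (z : ℂ) : ℝ := ∑ j : Fin (m+1), ‖z ^ (j : ℕ)‖ ^ 2

/-- Squared Frobenius norm of a matrix. -/
def frobNormSq (M : Matrix ι ι ℂ) : ℝ := ∑ i, ∑ k, ‖M i k‖ ^ 2

/-- Spectral (operator 2-) norm of a matrix. -/
def specNorm (M : Matrix ι ι ℂ) : ℝ := ‖Matrix.toEuclideanCLM (𝕜 := ℂ) M‖

/-- Frobenius norm of a matrix polynomial: `(Σ_j ‖A_j‖_F²)^{1/2}`. -/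
def polyNormF {m : ℕ} (A : Fin (m+1) → Matrix ι ι ℂ) : ℝ :=
  Real.sqrt (∑ j, frobNormSq (A j))

/-- Spectral norm of a matrix polynomial: `(Σ_j ‖A_j‖₂²)^{1/2}`. -/
def polyNorm2 {m : ℕ} (A : Fin (m+1) → Matrix ι ι ℂ) : ℝ :=
  Real.sqrt (∑ j, specNorm (A j) ^ 2)

/-- Structured backward error of `(lam, x)` as an approximate eigenpair of the matrix
polynomial `A`, with respect to the polynomial norm `N` and the structure class `S`. -/
def eta {m : ℕ} (N : (Fin (m+1) → Matrix ι ι ℂ) → ℝ)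
    (S : Set (Fin (m+1) → Matrix ι ι ℂ)) (lam : ℂ) (x : ι → ℂ)
    (A : Fin (m+1) → Matrix ι ι ℂ) : ℝ :=
  sInf {t | ∃ ΔA ∈ S, (polyEval A lam + polyEval ΔA lam) *ᵥ x = 0 ∧ t = N ΔA}

/-- A matrix polynomial is regular if `det P(z) ≠ 0` for some `z`. -/
def Regular {m : ℕ} (A : Fin (m+1) → Matrix ι ι ℂ) : Prop :=
  ∃ z : ℂ, (polyEval A z).det ≠ 0


/-- The class of T-even matrix polynomials: symmetric coefficients at even indices,
skew-symmetric coefficients at odd indices. -/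
def TevenPoly {ι : Type*} [Fintype ι] [DecidableEq ι] {m : ℕ} :
    Set (Fin (m+1) → Matrix ι ι ℂ) :=
  {B | ∀ j : Fin (m+1), (Even (j : ℕ) → (B j)ᵀ = B j) ∧ (¬ Even (j : ℕ) → (B j)ᵀ = -(B j))}

/-- `‖Π_e(Λ_m)‖₂²`, the squared norm of the even-index part of `(1, z, …, z^m)`. -/
def lamEvenNormSq (m : ℕ) (z : ℂ) : ℝ :=
  ∑ j : Fin (m+1), if Even (j : ℕ) then ‖z ^ (j : ℕ)‖ ^ 2 else 0


set_option linter.unusedSectionVars false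
set_option maxHeartbeats 1000000

namespace TevenAux


def finner (M N : Matrix ι ι ℂ) : ℂ := ∑ i, ∑ k, conj (M i k) * N i k

lemma vecMulVec_mulVec (a b v : ι → ℂ) : vecMulVec a b *ᵥ v = (b ⬝ᵥ v) • a := by
  ext i; simp [vecMulVec_apply, Matrix.mulVec, dotProduct, Finset.mul_sum, Finset.sum_mul]
  exact Finset.sum_congr rfl fun k _ => by ring

lemma finner_vecMulVec_left (a b : ι → ℂ) (C : Matrix ι ι ℂ) :
    finner (vecMulVec a b) C = star a ⬝ᵥ (C *ᵥ star b) := by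
  simp only [finner, vecMulVec_apply, Matrix.mulVec, dotProduct, Pi.star_apply,
    Finset.mul_sum, _root_.map_mul, Complex.star_def]
  exact Finset.sum_congr rfl fun i _ => Finset.sum_congr rfl fun k _ => by ring

lemma finner_vecMulVec_vecMulVec (a b c d : ι → ℂ) :
    finner (vecMulVec a b) (vecMulVec c d) = (star a ⬝ᵥ c) * (d ⬝ᵥ star b) := by
  rw [finner_vecMulVec_left, vecMulVec_mulVec, dotProduct_smul, smul_eq_mul]
  ring

lemma vecMulVec_transpose' (a b : ι → ℂ) : (vecMulVec a b)ᵀ = vecMulVec b a := by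
  ext i k; simp [vecMulVec_apply, mul_comm]

lemma vecMulVec_mul_vecMulVec (a b c d : ι → ℂ) :
    vecMulVec a b * vecMulVec c d = (b ⬝ᵥ c) • vecMulVec a d := by
  ext i k
  simp [Matrix.mul_apply, vecMulVec_apply, dotProduct, Finset.sum_mul]
  exact Finset.sum_congr rfl fun l _ => by ring

lemma dot_star_self (v : ι → ℂ) : star v ⬝ᵥ v = ((∑ i, ‖v i‖ ^ 2 : ℝ) : ℂ) := by
  simp only [dotProduct, Pi.star_apply, Complex.star_def]
  rw [Complex.ofReal_sum]
  exact Finset.sum_congr rfl fun i _ => by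
    rw [← Complex.normSq_eq_conj_mul_self, Complex.normSq_eq_norm_sq]

lemma dot_symm {C : Matrix ι ι ℂ} (h : Cᵀ = C) (v w : ι → ℂ) :
    v ⬝ᵥ (C *ᵥ w) = w ⬝ᵥ (C *ᵥ v) := by
  rw [dotProduct_mulVec, ← mulVec_transpose, h]
  exact dotProduct_comm _ _

lemma dot_skew {C : Matrix ι ι ℂ} (h : Cᵀ = -C) (v w : ι → ℂ) :
    v ⬝ᵥ (C *ᵥ w) = -(w ⬝ᵥ (C *ᵥ v)) := by
  rw [dotProduct_mulVec, ← mulVec_transpose, h, Matrix.neg_mulVec, neg_dotProduct,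
    dotProduct_comm]



lemma finner_add_right (M N P : Matrix ι ι ℂ) :
    finner M (N + P) = finner M N + finner M P := by
  simp [finner, mul_add, Finset.sum_add_distrib]

lemma finner_sub_right (M N P : Matrix ι ι ℂ) :
    finner M (N - P) = finner M N - finner M P := by
  simp [finner, mul_sub, Finset.sum_sub_distrib]

lemma finner_add_left (M N P : Matrix ι ι ℂ) :
    finner (M + N) P = finner M P + finner N P := by
  simp [finner, add_mul, Finset.sum_add_distrib]

lemma finner_sub_left (M N P : Matrix ι ι ℂ) :
    finner (M - N) P = finner M P - finner N P := by
  simp [finner, sub_mul, Finset.sum_sub_distrib]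

lemma finner_smul_left (c : ℂ) (M N : Matrix ι ι ℂ) :
    finner (c • M) N = conj c * finner M N := by
  simp [finner, Finset.mul_sum, mul_assoc]

lemma finner_smul_right (c : ℂ) (M N : Matrix ι ι ℂ) :
    finner M (c • N) = c * finner M N := by
  simp [finner, Finset.mul_sum]; ring_nf
  exact Finset.sum_congr rfl fun i _ => Finset.sum_congr rfl fun k _ => by ring

lemma finner_conj (M N : Matrix ι ι ℂ) : conj (finner M N) = finner N M := by
  simp [finner, map_sum, mul_comm]

lemma frobNormSq_eq (M : Matrix ι ι ℂ) : frobNormSq M = (finner M M).re := by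
  simp [frobNormSq, finner, Complex.re_sum, ← Complex.normSq_eq_conj_mul_self,
    Complex.sq_norm]

lemma frobNormSq_nonneg (M : Matrix ι ι ℂ) : 0 ≤ frobNormSq M :=
  Finset.sum_nonneg fun _ _ => Finset.sum_nonneg fun _ _ => by positivity

lemma frobNormSq_eq_zero {M : Matrix ι ι ℂ} (h : frobNormSq M = 0) : M = 0 := by
  ext i k
  have h1 : ∀ i ∈ Finset.univ, (0:ℝ) ≤ ∑ k, ‖M i k‖ ^ 2 :=
    fun _ _ => Finset.sum_nonneg fun _ _ => by positivity
  have h2 := (Finset.sum_eq_zero_iff_of_nonneg h1).mp h i (Finset.mem_univ i)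
  have h3 := (Finset.sum_eq_zero_iff_of_nonneg (fun _ _ => by positivity)).mp h2 k
    (Finset.mem_univ k)
  simpa using pow_eq_zero_iff (n := 2) (by norm_num) |>.mp h3

lemma frobNormSq_add (M N : Matrix ι ι ℂ) :
    frobNormSq (M + N) = frobNormSq M + frobNormSq N + 2 * (finner M N).re := by
  have := frobNormSq_eq (M + N)
  rw [finner_add_left, finner_add_right, finner_add_right] at this
  rw [this, frobNormSq_eq M, frobNormSq_eq N]
  have : (finner N M).re = (finner M N).re := by
    rw [← finner_conj M N, Complex.conj_re]
  simp [this]; ring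


lemma polyEval_mulVec {m : ℕ} (A : Fin (m+1) → Matrix ι ι ℂ) (z : ℂ) (x : ι → ℂ) :
    polyEval A z *ᵥ x = ∑ j : Fin (m+1), z ^ (j : ℕ) • (A j *ᵥ x) := by
  ext i
  simp [polyEval, Matrix.mulVec, dotProduct, Finset.sum_apply, Matrix.sum_apply,
    Finset.sum_mul, Finset.mul_sum]
  rw [Finset.sum_comm]
  exact Finset.sum_congr rfl fun j _ => Finset.sum_congr rfl fun k _ => by ring

lemma sum_frob_pyth {m : ℕ} (Emat C : Fin (m+1) → Matrix ι ι ℂ)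
    (h : ∑ j, finner (Emat j) (C j) = 0) :
    ∑ j, frobNormSq (Emat j + C j) = ∑ j, frobNormSq (Emat j) + ∑ j, frobNormSq (C j) := by
  have hre : ∑ j, (finner (Emat j) (C j)).re = 0 := by
    rw [← Complex.re_sum, h, Complex.zero_re]
  calc ∑ j, frobNormSq (Emat j + C j)
      = ∑ j, (frobNormSq (Emat j) + frobNormSq (C j) + 2 * (finner (Emat j) (C j)).re) :=
        Finset.sum_congr rfl fun j _ => frobNormSq_add _ _
    _ = ∑ j, frobNormSq (Emat j) + ∑ j, frobNormSq (C j)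
        + 2 * ∑ j, (finner (Emat j) (C j)).re := by
        rw [Finset.sum_add_distrib, Finset.sum_add_distrib, ← Finset.mul_sum]
    _ = ∑ j, frobNormSq (Emat j) + ∑ j, frobNormSq (C j) := by rw [hre]; ring

lemma eta_proj {m : ℕ} (S : Set (Fin (m+1) → Matrix ι ι ℂ)) (lam : ℂ) (x : ι → ℂ)
    (A Emat : Fin (m+1) → Matrix ι ι ℂ)
    (hES : Emat ∈ S)
    (hres : (polyEval A lam + polyEval Emat lam) *ᵥ x = 0)
    (horth : ∀ B ∈ S, (polyEval A lam + polyEval B lam) *ᵥ x = 0 →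
      ∑ j, finner (Emat j) (B j - Emat j) = 0) :
    eta polyNormF S lam x A = polyNormF Emat ∧
    ∀ B ∈ S, (polyEval A lam + polyEval B lam) *ᵥ x = 0 →
      polyNormF B = polyNormF Emat → B = Emat := by
  have key : ∀ B ∈ S, (polyEval A lam + polyEval B lam) *ᵥ x = 0 →
      ∑ j, frobNormSq (B j)
        = ∑ j, frobNormSq (Emat j) + ∑ j, frobNormSq (B j - Emat j) := by
    intro B hB hBres
    have h0 := sum_frob_pyth Emat (fun j => B j - Emat j) (horth B hB hBres)
    simpa using h0
  constructor
  · apply IsLeast.csInf_eq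
    constructor
    · exact ⟨Emat, hES, hres, rfl⟩
    · rintro t ⟨B, hB, hBres, rfl⟩
      unfold polyNormF
      apply Real.sqrt_le_sqrt
      rw [key B hB hBres]
      have := Finset.sum_nonneg (fun j (_ : j ∈ Finset.univ) => frobNormSq_nonneg (B j - Emat j))
      linarith
  · intro B hB hBres hnorm
    have hnn : (0:ℝ) ≤ ∑ j, frobNormSq (B j) :=
      Finset.sum_nonneg fun j _ => frobNormSq_nonneg _
    have hnn2 : (0:ℝ) ≤ ∑ j, frobNormSq (Emat j) :=
      Finset.sum_nonneg fun j _ => frobNormSq_nonneg _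
    have h1 : ∑ j, frobNormSq (B j) = ∑ j, frobNormSq (Emat j) :=
      (Real.sqrt_inj hnn hnn2).mp hnorm
    have h2 : ∑ j, frobNormSq (B j - Emat j) = 0 := by
      have := key B hB hBres; linarith
    funext j
    have h3 : B j - Emat j = 0 :=
      frobNormSq_eq_zero ((Finset.sum_eq_zero_iff_of_nonneg
        (fun j _ => frobNormSq_nonneg _)).mp h2 j (Finset.mem_univ j))
    exact sub_eq_zero.mp h3

lemma vecMulVec_sub_right (a b c : ι → ℂ) :
    vecMulVec a (b - c) = vecMulVec a b - vecMulVec a c := by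
  ext i k; simp [vecMulVec_apply, mul_sub]

lemma vecMulVec_smul_right (c : ℂ) (a b : ι → ℂ) :
    vecMulVec a (c • b) = c • vecMulVec a b := by
  ext i k; simp [vecMulVec_apply]; ring

lemma vecMulVec_sub_left (a b c : ι → ℂ) :
    vecMulVec (a - b) c = vecMulVec a c - vecMulVec b c := by
  ext i k; simp [vecMulVec_apply, sub_mul]

lemma vecMulVec_smul_left (c : ℂ) (a b : ι → ℂ) :
    vecMulVec (c • a) b = c • vecMulVec a b := by
  ext i k; simp [vecMulVec_apply]; ring

lemma dot_sum {k : ℕ} (v : ι → ℂ) (f : Fin k → ι → ℂ) :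
    v ⬝ᵥ (∑ j, f j) = ∑ j, v ⬝ᵥ f j := by
  simp [dotProduct, Finset.sum_apply, Finset.mul_sum]
  rw [Finset.sum_comm]

lemma conj_mul_self (z : ℂ) : conj z * z = ((‖z‖ : ℝ) : ℂ) ^ 2 := by
  rw [← Complex.normSq_eq_conj_mul_self, Complex.normSq_eq_norm_sq]
  push_cast; ring

lemma mul_conj_self (z : ℂ) : z * conj z = ((‖z‖ : ℝ) : ℂ) ^ 2 := by
  rw [mul_comm]; exact conj_mul_self z

lemma even_count (k : ℕ) :
    ∑ j ∈ Finset.range (2 * k), (if Even j then (1:ℝ) else 0) = k := by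
  induction k with
  | zero => simp
  | succ k ih =>
    rw [show 2 * (k + 1) = 2 * k + 1 + 1 by ring, Finset.sum_range_succ,
      Finset.sum_range_succ, ih]
    simp [parity_simps]

section blocks

variable {x s r : ι → ℂ}

lemma Esym_mulVec (hx1 : star x ⬝ᵥ x = 1) (hxs : x ⬝ᵥ s = 0) (a b : ℂ) :
    (a • vecMulVec (star x) (star x)
      + b • (vecMulVec (star x) s + vecMulVec s (star x))) *ᵥ x = a • star x + b • s := by
  have hsx : s ⬝ᵥ x = 0 := by rw [dotProduct_comm]; exact hxs
  rw [Matrix.add_mulVec, Matrix.smul_mulVec, Matrix.smul_mulVec,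
    Matrix.add_mulVec, vecMulVec_mulVec, vecMulVec_mulVec, vecMulVec_mulVec, hx1, hsx]
  simp

lemma Eskew_mulVec (hx1 : star x ⬝ᵥ x = 1) (hxs : x ⬝ᵥ s = 0) (b : ℂ) :
    (b • (vecMulVec s (star x) - vecMulVec (star x) s)) *ᵥ x = b • s := by
  have hsx : s ⬝ᵥ x = 0 := by rw [dotProduct_comm]; exact hxs
  rw [Matrix.smul_mulVec, Matrix.sub_mulVec, vecMulVec_mulVec, vecMulVec_mulVec,
    hx1, hsx]
  simp

lemma F_mulVec (hx1 : star x ⬝ᵥ x = 1) (b : ℂ) :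
    (b • vecMulVec r (star x)) *ᵥ x = b • r := by
  rw [Matrix.smul_mulVec, vecMulVec_mulVec, hx1]
  simp

lemma Esym_finner (hx1 : star x ⬝ᵥ x = 1) (hxs : x ⬝ᵥ s = 0) (a b : ℂ)
    {C : Matrix ι ι ℂ} (hC : Cᵀ = C) :
    finner (a • vecMulVec (star x) (star x)
        + b • (vecMulVec (star x) s + vecMulVec s (star x))) C
      = conj a * (x ⬝ᵥ (C *ᵥ x)) + conj b * (2 * (star s ⬝ᵥ (C *ᵥ x))) := by
  rw [finner_add_left, finner_smul_left, finner_smul_left, finner_add_left,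
    finner_vecMulVec_left, finner_vecMulVec_left, finner_vecMulVec_left, star_star,
    dot_symm hC x (star s)]
  ring

lemma Eskew_finner (hx1 : star x ⬝ᵥ x = 1) (hxs : x ⬝ᵥ s = 0) (b : ℂ)
    {C : Matrix ι ι ℂ} (hC : Cᵀ = -C) :
    finner (b • (vecMulVec s (star x) - vecMulVec (star x) s)) C
      = conj b * (2 * (star s ⬝ᵥ (C *ᵥ x))) := by
  rw [finner_smul_left, finner_sub_left, finner_vecMulVec_left, finner_vecMulVec_left,
    star_star, dot_skew hC x (star s)]
  ring

lemma F_finner (b : ℂ) (C : Matrix ι ι ℂ) :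
    finner (b • vecMulVec r (star x)) C = conj b * (star r ⬝ᵥ (C *ᵥ x)) := by
  rw [finner_smul_left, finner_vecMulVec_left, star_star]

lemma Esym_frob (hx1 : star x ⬝ᵥ x = 1) (hxs : x ⬝ᵥ s = 0) (a b : ℂ) :
    frobNormSq (a • vecMulVec (star x) (star x)
        + b • (vecMulVec (star x) s + vecMulVec s (star x)))
      = ‖a‖ ^ 2 + 2 * ‖b‖ ^ 2 * vecNormSq s := by
  have hxx : x ⬝ᵥ star x = 1 := by rw [dotProduct_comm]; exact hx1
  have hsx : s ⬝ᵥ x = 0 := by rw [dotProduct_comm]; exact hxs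
  have h1 : star x ⬝ᵥ star s = 0 := by rw [star_dotProduct_star, hsx, star_zero]
  have h2 : star s ⬝ᵥ star x = 0 := by rw [star_dotProduct_star, hxs, star_zero]
  have h3 : s ⬝ᵥ star s = ((vecNormSq s : ℝ) : ℂ) := by
    rw [dotProduct_comm, dot_star_self]; rfl
  have h4 : star s ⬝ᵥ s = ((vecNormSq s : ℝ) : ℂ) := by rw [dot_star_self]; rfl
  rw [frobNormSq_eq]
  rw [show (finner (a • vecMulVec (star x) (star x)
        + b • (vecMulVec (star x) s + vecMulVec s (star x)))
        (a • vecMulVec (star x) (star x)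
        + b • (vecMulVec (star x) s + vecMulVec s (star x))))
      = (((‖a‖ ^ 2 + 2 * ‖b‖ ^ 2 * vecNormSq s : ℝ)) : ℂ) from ?_]
  · rw [Complex.ofReal_re]
  · simp only [finner_add_left, finner_add_right, finner_smul_left, finner_smul_right,
      finner_vecMulVec_vecMulVec, star_star, hxx, hxs, hsx, h1, h2, h3, h4, hx1]
    push_cast
    linear_combination conj_mul_self a + (2 * ((vecNormSq s : ℝ) : ℂ)) * conj_mul_self b

lemma Eskew_frob (hx1 : star x ⬝ᵥ x = 1) (hxs : x ⬝ᵥ s = 0) (b : ℂ) :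
    frobNormSq (b • (vecMulVec s (star x) - vecMulVec (star x) s))
      = 2 * ‖b‖ ^ 2 * vecNormSq s := by
  have hxx : x ⬝ᵥ star x = 1 := by rw [dotProduct_comm]; exact hx1
  have hsx : s ⬝ᵥ x = 0 := by rw [dotProduct_comm]; exact hxs
  have h1 : star x ⬝ᵥ star s = 0 := by rw [star_dotProduct_star, hsx, star_zero]
  have h2 : star s ⬝ᵥ star x = 0 := by rw [star_dotProduct_star, hxs, star_zero]
  have h3 : s ⬝ᵥ star s = ((vecNormSq s : ℝ) : ℂ) := by
    rw [dotProduct_comm, dot_star_self]; rfl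
  have h4 : star s ⬝ᵥ s = ((vecNormSq s : ℝ) : ℂ) := by rw [dot_star_self]; rfl
  rw [frobNormSq_eq]
  rw [show (finner (b • (vecMulVec s (star x) - vecMulVec (star x) s))
        (b • (vecMulVec s (star x) - vecMulVec (star x) s)))
      = (((2 * ‖b‖ ^ 2 * vecNormSq s : ℝ)) : ℂ) from ?_]
  · rw [Complex.ofReal_re]
  · simp only [finner_sub_left, finner_sub_right, finner_smul_left, finner_smul_right,
      finner_vecMulVec_vecMulVec, star_star, hxx, hxs, hsx, h1, h2, h3, h4, hx1]
    push_cast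
    linear_combination (2 * ((vecNormSq s : ℝ) : ℂ)) * conj_mul_self b

lemma F_frob (hx1 : star x ⬝ᵥ x = 1) (b : ℂ) :
    frobNormSq (b • vecMulVec r (star x)) = ‖b‖ ^ 2 * vecNormSq r := by
  have hxx : x ⬝ᵥ star x = 1 := by rw [dotProduct_comm]; exact hx1
  have h4 : star r ⬝ᵥ r = ((vecNormSq r : ℝ) : ℂ) := by rw [dot_star_self]; rfl
  rw [frobNormSq_eq]
  rw [show (finner (b • vecMulVec r (star x)) (b • vecMulVec r (star x)))
      = (((‖b‖ ^ 2 * vecNormSq r : ℝ)) : ℂ) from ?_]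
  · rw [Complex.ofReal_re]
  · simp only [finner_smul_left, finner_smul_right, finner_vecMulVec_vecMulVec, star_star,
      hxx, h4]
    push_cast
    linear_combination (((vecNormSq r : ℝ) : ℂ)) * conj_mul_self b
      + (b * conj b * ((vecNormSq r : ℝ) : ℂ)) * hx1

lemma Esym_transpose (a b : ℂ) :
    (a • vecMulVec (star x) (star x)
        + b • (vecMulVec (star x) s + vecMulVec s (star x)))ᵀ
      = a • vecMulVec (star x) (star x)
        + b • (vecMulVec (star x) s + vecMulVec s (star x)) := by
  simp only [Matrix.transpose_add, Matrix.transpose_smul, vecMulVec_transpose']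
  rw [add_comm (vecMulVec s (star x)) (vecMulVec (star x) s)]

lemma Eskew_transpose (b : ℂ) :
    (b • (vecMulVec s (star x) - vecMulVec (star x) s))ᵀ
      = -(b • (vecMulVec s (star x) - vecMulVec (star x) s)) := by
  simp only [Matrix.transpose_sub, Matrix.transpose_smul, vecMulVec_transpose', ← smul_neg,
    neg_sub]

end blocks

end TevenAux

open TevenAux

/-- Structured backward error of an approximate eigenpair of a T-even
matrix polynomial, Frobenius norm: explicit formula, the special case `m` odd and `|λ| = 1`,
and the unique minimal T-even perturbation. -/
theorem Teven_backward_error_frobenius {n m : ℕ}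
    (A : Fin (m+1) → Matrix (Fin n) (Fin n) ℂ)
    (hA : A ∈ TevenPoly) (hreg : Regular A)
    (lam : ℂ) (x : Fin n → ℂ) (hx : star x ⬝ᵥ x = 1)
    (r : Fin n → ℂ) (hr : r = -(polyEval A lam *ᵥ x))
    (Px : Matrix (Fin n) (Fin n) ℂ) (hPx : Px = 1 - vecMulVec x (star x))
    (E : Fin (m+1) → Matrix (Fin n) (Fin n) ℂ)
    (hE : ∀ j : Fin (m+1),
      E j = if Even (j : ℕ) then
          ((conj (lam ^ (j : ℕ)) * (x ⬝ᵥ r)) / (lamEvenNormSq m lam : ℂ)) •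
              vecMulVec (star x) (star x)
            + (conj (lam ^ (j : ℕ)) / (lamNormSq m lam : ℂ)) •
              (vecMulVec (star x) r * Px + Pxᵀ * vecMulVec r (star x))
        else
          (conj (lam ^ (j : ℕ)) / (lamNormSq m lam : ℂ)) •
            (Pxᵀ * vecMulVec r (star x) - vecMulVec (star x) r * Px)) :
    eta polyNormF TevenPoly lam x A
      = Real.sqrt (‖x ⬝ᵥ r‖ ^ 2 / lamEvenNormSq m lam
          + 2 * (vecNormSq r - ‖x ⬝ᵥ r‖ ^ 2) / lamNormSq m lam) ∧
    (Odd m → ‖lam‖ = 1 →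
      eta polyNormF TevenPoly lam x A = Real.sqrt 2 * eta polyNormF Set.univ lam x A) ∧
    E ∈ TevenPoly ∧
    (polyEval A lam + polyEval E lam) *ᵥ x = 0 ∧
    polyNormF E = eta polyNormF TevenPoly lam x A ∧
    (∀ ΔB ∈ TevenPoly, (polyEval A lam + polyEval ΔB lam) *ᵥ x = 0 →
      polyNormF ΔB = eta polyNormF TevenPoly lam x A → ΔB = E) := by
  classical
  have hxx : x ⬝ᵥ star x = 1 := by rw [dotProduct_comm]; exact hx
  set s : Fin n → ℂ := r - (x ⬝ᵥ r) • star x with hsdef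
  have hxs : x ⬝ᵥ s = 0 := by
    rw [hsdef, dotProduct_sub, dotProduct_smul, hxx, smul_eq_mul, mul_one, sub_self]
  have hNe_pos : (0:ℝ) < lamEvenNormSq m lam := by
    have h1 : ∀ j ∈ (Finset.univ : Finset (Fin (m+1))),
        (0:ℝ) ≤ (if Even ((j:ℕ)) then ‖lam ^ (j:ℕ)‖ ^ 2 else 0) := fun j _ => by positivity
    have h2 := Finset.single_le_sum h1 (Finset.mem_univ (0 : Fin (m+1)))
    rw [show (if Even (((0 : Fin (m+1)) : ℕ)) then ‖lam ^ (((0 : Fin (m+1)) : ℕ))‖ ^ 2 else 0)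
        = (1:ℝ) from by norm_num] at h2
    unfold lamEvenNormSq
    linarith
  have hN_pos : (0:ℝ) < lamNormSq m lam := by
    have h1 : ∀ j ∈ (Finset.univ : Finset (Fin (m+1))),
        (0:ℝ) ≤ ‖lam ^ (j:ℕ)‖ ^ 2 := fun j _ => by positivity
    have h2 := Finset.single_le_sum h1 (Finset.mem_univ (0 : Fin (m+1)))
    rw [show ‖lam ^ (((0 : Fin (m+1)) : ℕ))‖ ^ 2 = (1:ℝ) from by norm_num] at h2
    unfold lamNormSq
    linarith
  have hNe0 : ((lamEvenNormSq m lam : ℝ) : ℂ) ≠ 0 := by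
    exact_mod_cast hNe_pos.ne'
  have hN0 : ((lamNormSq m lam : ℝ) : ℂ) ≠ 0 := by
    exact_mod_cast hN_pos.ne'
  have hE' : ∀ j : Fin (m+1), E j = if Even (j : ℕ) then
      (conj (lam ^ (j : ℕ)) * (x ⬝ᵥ r) / (lamEvenNormSq m lam : ℂ)) •
          vecMulVec (star x) (star x)
        + (conj (lam ^ (j : ℕ)) / (lamNormSq m lam : ℂ)) •
          (vecMulVec (star x) s + vecMulVec s (star x))
    else (conj (lam ^ (j : ℕ)) / (lamNormSq m lam : ℂ)) •
          (vecMulVec s (star x) - vecMulVec (star x) s) := by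
    intro j
    have hm1 : vecMulVec (star x) r * Px = vecMulVec (star x) s := by
      rw [hPx, Matrix.mul_sub, Matrix.mul_one, TevenAux.vecMulVec_mul_vecMulVec, dotProduct_comm r x,
        hsdef, vecMulVec_sub_right, vecMulVec_smul_right]
    have hm2 : Pxᵀ * vecMulVec r (star x) = vecMulVec s (star x) := by
      rw [hPx, Matrix.transpose_sub, Matrix.transpose_one, vecMulVec_transpose',
        Matrix.sub_mul, Matrix.one_mul, TevenAux.vecMulVec_mul_vecMulVec, hsdef, vecMulVec_sub_left,
        vecMulVec_smul_left]
    rw [hE j, hm1, hm2]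
  have hEmem : E ∈ TevenPoly := by
    intro j
    constructor
    · intro hj; rw [hE' j, if_pos hj]; exact Esym_transpose _ _
    · intro hj; rw [hE' j, if_neg hj]; exact Eskew_transpose _
  have hEres : polyEval E lam *ᵥ x = r := by
    rw [polyEval_mulVec]
    have hterm : ∀ j : Fin (m+1), lam ^ (j:ℕ) • (E j *ᵥ x)
        = (if Even (j:ℕ) then
              ((‖lam ^ (j:ℕ)‖ : ℝ) : ℂ) ^ 2 * ((x ⬝ᵥ r) / (lamEvenNormSq m lam : ℂ)) else 0)
            • star x
          + (((‖lam ^ (j:ℕ)‖ : ℝ) : ℂ) ^ 2 / (lamNormSq m lam : ℂ)) • s := by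
      intro j
      by_cases hj : Even (j:ℕ)
      · rw [hE' j, if_pos hj, if_pos hj, Esym_mulVec hx hxs, smul_add, smul_smul, smul_smul]
        congr 1
        · congr 1
          linear_combination ((x ⬝ᵥ r) / (lamEvenNormSq m lam : ℂ))
            * mul_conj_self (lam ^ (j:ℕ))
        · congr 1
          linear_combination (1 / (lamNormSq m lam : ℂ)) * mul_conj_self (lam ^ (j:ℕ))
      · rw [hE' j, if_neg hj, if_neg hj, Eskew_mulVec hx hxs, smul_smul, zero_smul, zero_add]
        congr 1
        linear_combination (1 / (lamNormSq m lam : ℂ)) * mul_conj_self (lam ^ (j:ℕ))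
    rw [Finset.sum_congr rfl (fun j _ => hterm j), Finset.sum_add_distrib,
      ← Finset.sum_smul, ← Finset.sum_smul]
    have c1 : (∑ j : Fin (m+1), if Even (j:ℕ) then
        ((‖lam ^ (j:ℕ)‖ : ℝ) : ℂ) ^ 2 * ((x ⬝ᵥ r) / (lamEvenNormSq m lam : ℂ)) else 0)
        = x ⬝ᵥ r := by
      have hsplit : ∀ j : Fin (m+1), (if Even (j:ℕ) then
          ((‖lam ^ (j:ℕ)‖ : ℝ) : ℂ) ^ 2 * ((x ⬝ᵥ r) / (lamEvenNormSq m lam : ℂ)) else 0)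
          = (if Even (j:ℕ) then ((‖lam ^ (j:ℕ)‖ : ℝ) : ℂ) ^ 2 else 0)
            * ((x ⬝ᵥ r) / (lamEvenNormSq m lam : ℂ)) := fun j => by split_ifs <;> simp
      rw [Finset.sum_congr rfl (fun j _ => hsplit j), ← Finset.sum_mul]
      have hce : (∑ j : Fin (m+1), if Even (j:ℕ) then ((‖lam ^ (j:ℕ)‖ : ℝ) : ℂ) ^ 2 else 0)
          = ((lamEvenNormSq m lam : ℝ) : ℂ) := by
        rw [lamEvenNormSq, Complex.ofReal_sum]
        exact Finset.sum_congr rfl fun j _ => by split_ifs <;> push_cast <;> simp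
      rw [hce]
      field_simp
    have c2 : (∑ j : Fin (m+1), ((‖lam ^ (j:ℕ)‖ : ℝ) : ℂ) ^ 2 / (lamNormSq m lam : ℂ)) = 1 := by
      rw [← Finset.sum_div]
      have hca : (∑ j : Fin (m+1), ((‖lam ^ (j:ℕ)‖ : ℝ) : ℂ) ^ 2)
          = ((lamNormSq m lam : ℝ) : ℂ) := by
        rw [lamNormSq, Complex.ofReal_sum]
        exact Finset.sum_congr rfl fun j _ => by push_cast; simp
      rw [hca]
      field_simp
    rw [c1, c2, one_smul, hsdef, add_comm, sub_add_cancel]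
  have hres : (polyEval A lam + polyEval E lam) *ᵥ x = 0 := by
    have hAx : polyEval A lam *ᵥ x = -r := by rw [hr, neg_neg]
    rw [Matrix.add_mulVec, hAx, hEres, neg_add_cancel]
  have horth : ∀ B ∈ TevenPoly, (polyEval A lam + polyEval B lam) *ᵥ x = 0 →
      ∑ j, finner (E j) (B j - E j) = 0 := by
    intro B hB hBres
    have hCsym : ∀ j : Fin (m+1), Even (j:ℕ) → (B j - E j)ᵀ = B j - E j := fun j hj => by
      rw [Matrix.transpose_sub, (hB j).1 hj, (hEmem j).1 hj]
    have hCskew : ∀ j : Fin (m+1), ¬Even (j:ℕ) → (B j - E j)ᵀ = -(B j - E j) := fun j hj => by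
      rw [Matrix.transpose_sub, (hB j).2 hj, (hEmem j).2 hj, neg_sub_neg]
      exact (neg_sub _ _).symm
    have hCres : ∑ j : Fin (m+1), lam ^ (j:ℕ) • ((B j - E j) *ᵥ x) = 0 := by
      have hAx : polyEval A lam *ᵥ x = -r := by rw [hr, neg_neg]
      have h1 : polyEval B lam *ᵥ x = r := by
        rw [Matrix.add_mulVec, hAx] at hBres
        linear_combination (norm := module) hBres
      calc ∑ j : Fin (m+1), lam ^ (j:ℕ) • ((B j - E j) *ᵥ x)
          = ∑ j : Fin (m+1), (lam ^ (j:ℕ) • (B j *ᵥ x) - lam ^ (j:ℕ) • (E j *ᵥ x)) :=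
            Finset.sum_congr rfl fun j _ => by rw [Matrix.sub_mulVec, smul_sub]
        _ = polyEval B lam *ᵥ x - polyEval E lam *ᵥ x := by
            rw [Finset.sum_sub_distrib, ← polyEval_mulVec, ← polyEval_mulVec]
        _ = 0 := by rw [h1, hEres, sub_self]
    have hterm : ∀ j : Fin (m+1), finner (E j) (B j - E j)
        = (if Even (j:ℕ) then
            conj (x ⬝ᵥ r) / (lamEvenNormSq m lam : ℂ)
              * (lam ^ (j:ℕ) * (x ⬝ᵥ ((B j - E j) *ᵥ x))) else 0)
          + 2 / (lamNormSq m lam : ℂ)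
              * (lam ^ (j:ℕ) * (star s ⬝ᵥ ((B j - E j) *ᵥ x))) := by
      intro j
      by_cases hj : Even (j:ℕ)
      · nth_rewrite 1 [hE' j]
        rw [if_pos hj, if_pos hj, Esym_finner hx hxs _ _ (hCsym j hj)]
        simp only [map_div₀, _root_.map_mul, Complex.conj_conj, Complex.conj_ofReal]
        ring
      · nth_rewrite 1 [hE' j]
        rw [if_neg hj, if_neg hj, Eskew_finner hx hxs _ (hCskew j hj)]
        simp only [map_div₀, Complex.conj_conj, Complex.conj_ofReal, zero_add]
        ring
    rw [Finset.sum_congr rfl (fun j _ => hterm j), Finset.sum_add_distrib]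
    have hodd0 : ∀ j : Fin (m+1), ¬Even (j:ℕ) → x ⬝ᵥ ((B j - E j) *ᵥ x) = 0 := fun j hj => by
      have h := dot_skew (hCskew j hj) x x
      have h2 : x ⬝ᵥ ((B j - E j) *ᵥ x) + x ⬝ᵥ ((B j - E j) *ᵥ x) = 0 := by
        linear_combination h
      exact add_self_eq_zero.mp h2
    have hA1 : (∑ j : Fin (m+1), if Even (j:ℕ) then
        conj (x ⬝ᵥ r) / (lamEvenNormSq m lam : ℂ)
          * (lam ^ (j:ℕ) * (x ⬝ᵥ ((B j - E j) *ᵥ x))) else 0) = 0 := by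
      have hstep : ∀ j : Fin (m+1), (if Even (j:ℕ) then
          conj (x ⬝ᵥ r) / (lamEvenNormSq m lam : ℂ)
            * (lam ^ (j:ℕ) * (x ⬝ᵥ ((B j - E j) *ᵥ x))) else 0)
          = conj (x ⬝ᵥ r) / (lamEvenNormSq m lam : ℂ)
            * (x ⬝ᵥ (lam ^ (j:ℕ) • ((B j - E j) *ᵥ x))) := fun j => by
        by_cases hj : Even (j:ℕ)
        · rw [if_pos hj, dotProduct_smul, smul_eq_mul]
        · rw [if_neg hj, dotProduct_smul, smul_eq_mul, hodd0 j hj]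
          ring
      rw [Finset.sum_congr rfl (fun j _ => hstep j), ← Finset.mul_sum, ← dot_sum, hCres]
      simp
    have hA2 : (∑ j : Fin (m+1), 2 / (lamNormSq m lam : ℂ)
        * (lam ^ (j:ℕ) * (star s ⬝ᵥ ((B j - E j) *ᵥ x)))) = 0 := by
      have hstep : ∀ j : Fin (m+1), 2 / (lamNormSq m lam : ℂ)
          * (lam ^ (j:ℕ) * (star s ⬝ᵥ ((B j - E j) *ᵥ x)))
          = 2 / (lamNormSq m lam : ℂ)
            * (star s ⬝ᵥ (lam ^ (j:ℕ) • ((B j - E j) *ᵥ x))) := fun j => by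
        rw [dotProduct_smul, smul_eq_mul]
      rw [Finset.sum_congr rfl (fun j _ => hstep j), ← Finset.mul_sum, ← dot_sum, hCres]
      simp
    rw [hA1, hA2, add_zero]
  have hvs : vecNormSq s = vecNormSq r - ‖x ⬝ᵥ r‖ ^ 2 := by
    have h1 : star s ⬝ᵥ s = ((vecNormSq s : ℝ) : ℂ) := by rw [dot_star_self]; rfl
    have h2 : star r ⬝ᵥ r = ((vecNormSq r : ℝ) : ℂ) := by rw [dot_star_self]; rfl
    have h3 : star r ⬝ᵥ star x = conj (x ⬝ᵥ r) := by rw [star_dotProduct_star]; rfl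
    have h4 : star s ⬝ᵥ s
        = ((vecNormSq r : ℝ) : ℂ) - (x ⬝ᵥ r) * conj (x ⬝ᵥ r) := by
      simp only [hsdef, star_sub, star_smul, star_star, sub_dotProduct, dotProduct_sub,
        smul_dotProduct, dotProduct_smul, smul_eq_mul, h2, h3, hxx, Complex.star_def]
      ring
    have h6 : ((vecNormSq s : ℝ) : ℂ)
        = ((vecNormSq r : ℝ) : ℂ) - (((‖x ⬝ᵥ r‖ : ℝ) : ℂ)) ^ 2 := by
      rw [← h1, h4, mul_conj_self]
    have h7 : ((vecNormSq s : ℝ) : ℂ) = (((vecNormSq r - ‖x ⬝ᵥ r‖ ^ 2 : ℝ)) : ℂ) := by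
      rw [h6]; push_cast; ring
    exact_mod_cast h7
  have hfrob : ∑ j, frobNormSq (E j)
      = ‖x ⬝ᵥ r‖ ^ 2 / lamEvenNormSq m lam
        + 2 * (vecNormSq r - ‖x ⬝ᵥ r‖ ^ 2) / lamNormSq m lam := by
    have hterm : ∀ j : Fin (m+1), frobNormSq (E j)
        = (if Even (j:ℕ) then
            ‖lam ^ (j:ℕ)‖ ^ 2 * (‖x ⬝ᵥ r‖ ^ 2 / (lamEvenNormSq m lam) ^ 2) else 0)
          + ‖lam ^ (j:ℕ)‖ ^ 2 * (2 * vecNormSq s / (lamNormSq m lam) ^ 2) := by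
      intro j
      by_cases hj : Even (j:ℕ)
      · rw [hE' j, if_pos hj, if_pos hj, Esym_frob hx hxs]
        rw [norm_div, norm_div, norm_mul, RCLike.norm_conj,
          Complex.norm_real,
          Complex.norm_real, Real.norm_eq_abs,
          Real.norm_eq_abs, abs_of_pos hNe_pos, abs_of_pos hN_pos]
        field_simp
      · rw [hE' j, if_neg hj, if_neg hj, Eskew_frob hx hxs]
        rw [norm_div, RCLike.norm_conj, Complex.norm_real,
          Real.norm_eq_abs, abs_of_pos hN_pos]
        field_simp
        ring
    rw [Finset.sum_congr rfl (fun j _ => hterm j), Finset.sum_add_distrib]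
    have hsplit : ∀ j : Fin (m+1), (if Even (j:ℕ) then
        ‖lam ^ (j:ℕ)‖ ^ 2 * (‖x ⬝ᵥ r‖ ^ 2 / (lamEvenNormSq m lam) ^ 2) else 0)
        = (if Even (j:ℕ) then ‖lam ^ (j:ℕ)‖ ^ 2 else 0)
          * (‖x ⬝ᵥ r‖ ^ 2 / (lamEvenNormSq m lam) ^ 2) := fun j => by split_ifs <;> simp
    rw [Finset.sum_congr rfl (fun j _ => hsplit j), ← Finset.sum_mul, ← Finset.sum_mul]
    have hs1 : (∑ j : Fin (m+1), if Even ((j:ℕ)) then ‖lam ^ (j:ℕ)‖ ^ 2 else 0)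
        = lamEvenNormSq m lam := rfl
    have hs2 : (∑ j : Fin (m+1), ‖lam ^ (j:ℕ)‖ ^ 2) = lamNormSq m lam := rfl
    rw [hs1, hs2, hvs]
    field_simp
  obtain ⟨hval, huniq⟩ := eta_proj TevenPoly lam x A E hEmem hres horth
  have hval' : eta polyNormF TevenPoly lam x A
      = Real.sqrt (‖x ⬝ᵥ r‖ ^ 2 / lamEvenNormSq m lam
          + 2 * (vecNormSq r - ‖x ⬝ᵥ r‖ ^ 2) / lamNormSq m lam) := by
    rw [hval]; unfold polyNormF; rw [hfrob]
  refine ⟨hval', ?_, hEmem, hres, by rw [hval], fun B hB h1 h2 => huniq B hB h1 ?_⟩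
  swap
  · rw [h2, hval]
  intro hmo hlam
  set F : Fin (m+1) → Matrix (Fin n) (Fin n) ℂ :=
    fun j => (conj (lam ^ (j:ℕ)) / (lamNormSq m lam : ℂ)) • vecMulVec r (star x) with hFdef
  have hca : (∑ j : Fin (m+1), ((‖lam ^ (j:ℕ)‖ : ℝ) : ℂ) ^ 2)
      = ((lamNormSq m lam : ℝ) : ℂ) := by
    rw [lamNormSq, Complex.ofReal_sum]
    exact Finset.sum_congr rfl fun j _ => by push_cast; simp
  have hAx : polyEval A lam *ᵥ x = -r := by rw [hr, neg_neg]
  have hFx : polyEval F lam *ᵥ x = r := by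
    rw [polyEval_mulVec]
    have hterm : ∀ j : Fin (m+1), lam ^ (j:ℕ) • (F j *ᵥ x)
        = (((‖lam ^ (j:ℕ)‖ : ℝ) : ℂ) ^ 2 / (lamNormSq m lam : ℂ)) • r := by
      intro j
      rw [hFdef]
      dsimp only
      rw [F_mulVec hx, smul_smul]
      congr 1
      linear_combination (1 / (lamNormSq m lam : ℂ)) * mul_conj_self (lam ^ (j:ℕ))
    rw [Finset.sum_congr rfl (fun j _ => hterm j), ← Finset.sum_smul, ← Finset.sum_div, hca]
    rw [div_self hN0, one_smul]
  have hFres : (polyEval A lam + polyEval F lam) *ᵥ x = 0 := by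
    rw [Matrix.add_mulVec, hAx, hFx, neg_add_cancel]
  have hForth : ∀ B ∈ (Set.univ : Set (Fin (m+1) → Matrix (Fin n) (Fin n) ℂ)),
      (polyEval A lam + polyEval B lam) *ᵥ x = 0 →
      ∑ j, finner (F j) (B j - F j) = 0 := by
    intro B _ hBres
    have h1 : polyEval B lam *ᵥ x = r := by
      rw [Matrix.add_mulVec, hAx] at hBres
      linear_combination (norm := module) hBres
    have hCres : ∑ j : Fin (m+1), lam ^ (j:ℕ) • ((B j - F j) *ᵥ x) = 0 := by
      calc ∑ j : Fin (m+1), lam ^ (j:ℕ) • ((B j - F j) *ᵥ x)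
          = ∑ j : Fin (m+1), (lam ^ (j:ℕ) • (B j *ᵥ x) - lam ^ (j:ℕ) • (F j *ᵥ x)) :=
            Finset.sum_congr rfl fun j _ => by rw [Matrix.sub_mulVec, smul_sub]
        _ = polyEval B lam *ᵥ x - polyEval F lam *ᵥ x := by
            rw [Finset.sum_sub_distrib, ← polyEval_mulVec, ← polyEval_mulVec]
        _ = 0 := by rw [h1, hFx, sub_self]
    have hterm : ∀ j : Fin (m+1), finner (F j) (B j - F j)
        = (1 / (lamNormSq m lam : ℂ))
            * (star r ⬝ᵥ (lam ^ (j:ℕ) • ((B j - F j) *ᵥ x))) := by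
      intro j
      nth_rewrite 1 [hFdef]
      dsimp only
      rw [F_finner, dotProduct_smul, smul_eq_mul]
      simp only [map_div₀, Complex.conj_conj, Complex.conj_ofReal]
      ring
    rw [Finset.sum_congr rfl (fun j _ => hterm j), ← Finset.mul_sum, ← dot_sum, hCres]
    simp
  have hFfrob : ∑ j, frobNormSq (F j) = vecNormSq r / lamNormSq m lam := by
    have hterm : ∀ j : Fin (m+1), frobNormSq (F j)
        = ‖lam ^ (j:ℕ)‖ ^ 2 * (vecNormSq r / (lamNormSq m lam) ^ 2) := by
      intro j
      rw [hFdef]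
      dsimp only
      rw [F_frob hx, norm_div, RCLike.norm_conj,
        Complex.norm_real, Real.norm_eq_abs,
        abs_of_pos hN_pos]
      field_simp
    rw [Finset.sum_congr rfl (fun j _ => hterm j), ← Finset.sum_mul]
    have hs2 : (∑ j : Fin (m+1), ‖lam ^ (j:ℕ)‖ ^ 2) = lamNormSq m lam := rfl
    rw [hs2]
    field_simp
  obtain ⟨hval2, _⟩ := eta_proj Set.univ lam x A F (Set.mem_univ F) hFres hForth
  have hval2' : eta polyNormF Set.univ lam x A
      = Real.sqrt (vecNormSq r / lamNormSq m lam) := by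
    rw [hval2]; unfold polyNormF; rw [hFfrob]
  obtain ⟨t, ht⟩ := hmo
  have hone : ∀ j : Fin (m+1), ‖lam ^ (j:ℕ)‖ ^ 2 = 1 := fun j => by
    rw [norm_pow, hlam, one_pow, one_pow]
  have hNv : lamNormSq m lam = (m + 1 : ℝ) := by
    unfold lamNormSq
    rw [Finset.sum_congr rfl fun j _ => hone j]
    simp [Finset.card_univ]
  have hNev : 2 * lamEvenNormSq m lam = (m + 1 : ℝ) := by
    unfold lamEvenNormSq
    rw [Finset.sum_congr rfl fun j _ => by rw [hone j]]
    rw [Fin.sum_univ_eq_sum_range (fun j => if Even j then (1:ℝ) else 0) (m+1)]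
    rw [show m + 1 = 2 * (t + 1) from by omega, even_count]
    push_cast
    rw [ht]
    push_cast
    ring
  have h2Ne : lamNormSq m lam = 2 * lamEvenNormSq m lam := by rw [hNv, ← hNev]
  rw [hval', hval2', ← Real.sqrt_mul (by norm_num : (0:ℝ) ≤ 2)]
  congr 1
  rw [h2Ne]
  field_simp
  ring
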